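/- (Lossless linearization, Theorem 2.) Let Δt > 0, K a positive integer, parameters 0 < γ ≤ Γ and 0 < γ̂ ≤ Γ̂ with γ/Δt, Γ/Δt, γ̂/Δt, Γ̂/Δt positive integers and Γ/Δt ≤ K, Γ̂/Δt ≤ K, and η⁺, η⁻ ∈ (0,1]; write Δη = 1/η⁻ − η⁺. Fix 𝐝 ∈ ℝ^K, bounds y̲ ≤ ȳ, intervals Y₀ = [y̲₀, ȳ₀] and Ŷ₀ = [ŷ̲₀, ŷ̄₀], charger bounds ȳ⁺, ȳ⁻ ∈ ℝ₊^K, a target y* ∈ ℝ, a penalty p* ≥ 0, a feasible set X_K ⊆ ℝ₊^K × ℝ₊^K, and a linear cost c_K. Then the optimal value of the non-convex robust problem (R_K) — minimize over (𝐱^b,𝐱^r) ∈ X_K the quantity c_K(𝐱^b,𝐱^r) + max_{𝛅 ∈ D̂_K, y₀ ∈ Ŷ₀} p*·|y_K(𝐱^b,𝐱^r,𝛅,y₀) − y*| subject to [x^b_k+δ_k x^r_k]⁺ ≤ ȳ⁺_k and [x^b_k+δ_k x^r_k]⁻ ≤ ȳ⁻_k for all 𝛅 ∈ D_K, k ∈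 {1,…,K}, and y̲ ≤ y_k(𝐱^b,𝐱^r,𝛅,y₀) ≤ ȳ for all 𝛅 ∈ D_K, k ∈ {0,…,K}, y₀ ∈ Y₀ — equals the optimal value of the linear robust problem (R'_K): minimize over (𝐱^b,𝐱^r) ∈ X_K, 𝐦 ∈ ℝ^K, z ∈ ℝ the quantity c_K(𝐱^b,𝐱^r) + p*·z subject to x^r_k + x^b_k ≤ ȳ⁺_k and x^r_k − x^b_k ≤ ȳ⁻_k for all k; m_k ≥ η⁺ x^r_k and m_k ≥ (1/η⁻) x^r_k − Δη·x^b_k for all k; ȳ₀ + Δt Σ_{l=1}^{k}(η⁺(x^b_l + δ_l x^r_l) − d_l) ≤ ȳ for all 𝛅 ∈ D_K⁺ and k ∈ {0,…,K}; y̲₀ + Δt Σ_{l=1}^{k}(η⁺ x^b_l − m_l δ_l − d_l) ≥ y̲ for all 𝛅 ∈ D_K⁺ and k ∈ {0,…,K}; ŷ̄₀ − z + Δt Σ_{k=1}^{K}(η⁺(x^b_k + δ_k x^r_k) − d_k) ≤ y* for all 𝛅 ∈ D̂_K⁺; and ŷ̲₀ + z + Δt Σ_{k=1}^{K}(η⁺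 x^b_k − m_k δ_k − d_k) ≥ y* for all 𝛅 ∈ D̂_K⁺. -/

import Mathlib

open MeasureTheory Set

noncomputable section

/-- The continuous-time uncertainty set `D` of measurable frequency-deviation
scenarios `δ : [0,T] → [-1,1]` whose total absolute deviation over every
backward window of length `Γ` is at most `γ`. -/
def Dset (T Γ γ : ℝ) : Set (ℝ → ℝ) :=
  {δ | Measurable δ ∧ (∀ t ∈ Icc (0:ℝ) T, δ t ∈ Icc (-1:ℝ) 1) ∧
    ∀ t ∈ Icc (0:ℝ) T, (∫ s in (max (t - Γ) 0)..t, |δ s|) ≤ γ}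

/-- The nonnegative part `D⁺` of the continuous uncertainty set. -/
def DsetPlus (T Γ γ : ℝ) : Set (ℝ → ℝ) :=
  Dset T Γ γ ∩ {δ | ∀ t ∈ Icc (0:ℝ) T, δ t ∈ Icc (0:ℝ) 1}

/-- The discrete uncertainty set `D_K` (with `0`-based indexing): vectors in
`[-1,1]^K` whose sum of absolute values over each backward window of `W = Γ/Δt`
periods is at most `g = γ/Δt`. -/
def DK (K W g : ℕ) : Set (Fin K → ℝ) :=
  {δ | (∀ l, |δ l| ≤ 1) ∧ ∀ k : Fin K,
    (∑ l ∈ Finset.univ.filter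
      (fun l : Fin K => (k : ℕ) + 1 - W ≤ (l : ℕ) ∧ (l : ℕ) ≤ (k : ℕ)), |δ l|) ≤ (g : ℝ)}

/-- The nonnegative part `D_K⁺` of the discrete uncertainty set. -/
def DKplus (K W g : ℕ) : Set (Fin K → ℝ) :=
  DK K W g ∩ {δ | ∀ l, 0 ≤ δ l}

/-- The lifting operator `L` mapping a vector to the piecewise constant function
with value `v k` on `[kΔt, (k+1)Δt)` (0-based), and `v (K-1)` at `t = KΔt`. -/
def lift (Δt : ℝ) {K : ℕ} (v : Fin K → ℝ) : ℝ → ℝ := fun t =>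
  if h : min (⌊t / Δt⌋.toNat) (K - 1) < K then v ⟨min (⌊t / Δt⌋.toNat) (K - 1), h⟩ else 0

/-- The averaging operator `L†` mapping a function to its vector of averages
over the trading intervals. -/
def avg (Δt : ℝ) (K : ℕ) (w : ℝ → ℝ) : Fin K → ℝ := fun k =>
  (1 / Δt) * ∫ s in (((k : ℕ) : ℝ) * Δt)..((((k : ℕ) : ℝ) + 1) * Δt), w s

/-- The integrand of the continuous-time state-of-charge. -/
def socIntegrand (ηp ηm : ℝ) (xb xr δ d : ℝ → ℝ) (s : ℝ) : ℝ :=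
  ηp * max (xb s + δ s * xr s) 0 - (1 / ηm) * max (-(xb s + δ s * xr s)) 0 - d s

/-- The continuous-time state-of-charge `y(x^b, x^r, δ, y₀, t)`. -/
def soc (ηp ηm : ℝ) (xb xr δ d : ℝ → ℝ) (y0 t : ℝ) : ℝ :=
  y0 + ∫ s in (0:ℝ)..t, socIntegrand ηp ηm xb xr δ d s

/-- The discrete-time state-of-charge `y_k(𝐱^b, 𝐱^r, 𝛅, y₀)` (0-based indexing:
the sum extends over the first `k` components). -/
def ysoc (Δt ηp ηm : ℝ) {K : ℕ} (xb xr δ d : Fin K → ℝ) (y0 : ℝ) (k : ℕ) : ℝ :=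
  y0 + Δt * ∑ l ∈ Finset.univ.filter (fun l : Fin K => (l : ℕ) < k),
    (ηp * max (xb l + δ l * xr l) 0 - (1 / ηm) * max (-(xb l + δ l * xr l)) 0 - d l)

/-- Feasibility of `(𝐱^b,𝐱^r,𝐦,z)` in the linear robust problem (R'_K). -/
def RprimeFeasible (Δt ηp ηm : ℝ) {K : ℕ} (W g Wh gh : ℕ) (d ybarp ybarm : Fin K → ℝ)
    (ylo yhi yl0 yu0 ylh yuh ystar : ℝ)
    (p : (Fin K → ℝ) × (Fin K → ℝ)) (m : Fin K → ℝ) (z : ℝ) : Prop :=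
  (∀ j : Fin K, p.2 j + p.1 j ≤ ybarp j ∧ p.2 j - p.1 j ≤ ybarm j) ∧
  (∀ j : Fin K, ηp * p.2 j ≤ m j ∧ (1 / ηm) * p.2 j - (1 / ηm - ηp) * p.1 j ≤ m j) ∧
  (∀ δ ∈ DKplus K W g, ∀ k ≤ K,
    yu0 + Δt * (∑ l ∈ Finset.univ.filter (fun l : Fin K => (l : ℕ) < k),
      (ηp * (p.1 l + δ l * p.2 l) - d l)) ≤ yhi) ∧
  (∀ δ ∈ DKplus K W g, ∀ k ≤ K,
    ylo ≤ yl0 + Δt * (∑ l ∈ Finset.univ.filter (fun l : Fin K => (l : ℕ) < k),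
      (ηp * p.1 l - m l * δ l - d l))) ∧
  (∀ δ ∈ DKplus K Wh gh,
    yuh - z + Δt * (∑ j, (ηp * (p.1 j + δ j * p.2 j) - d j)) ≤ ystar) ∧
  (∀ δ ∈ DKplus K Wh gh,
    ystar ≤ ylh + z + Δt * (∑ j, (ηp * p.1 j - m j * δ j - d j)))

namespace Aux

/-- extension of a vector to ℕ by zero -/
def ext {K : ℕ} (f : Fin K → ℝ) : ℕ → ℝ := fun n => if h : n < K then f ⟨n, h⟩ else 0

lemma ext_val {K : ℕ} (f : Fin K → ℝ) (l : Fin K) : ext f (l : ℕ) = f l := by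
  simp [ext, l.isLt]

lemma sum_filt {K : ℕ} (f : Fin K → ℝ) (P : ℕ → Prop) [DecidablePred P] :
    ∑ l ∈ Finset.univ.filter (fun l : Fin K => P (l : ℕ)), f l
      = ∑ m ∈ (Finset.range K).filter P, ext f m := by
  rw [Finset.sum_filter, Finset.sum_filter]
  rw [← Fin.sum_univ_eq_sum_range (fun m => if P m then ext f m else 0) K]
  refine Finset.sum_congr rfl (fun l _ => ?_)
  by_cases h : P (l : ℕ) <;> simp [h, ext_val]

lemma range_filter_lt {K n : ℕ} (hn : n ≤ K) :
    (Finset.range K).filter (fun m => m < n) = Finset.range n := by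
  ext m; simp only [Finset.mem_filter, Finset.mem_range]
  constructor
  · rintro ⟨_, h⟩; exact h
  · intro h; exact ⟨lt_of_lt_of_le h hn, h⟩

lemma range_filter_window {K a b : ℕ} (hb : b < K) :
    (Finset.range K).filter (fun m => a ≤ m ∧ m ≤ b) = Finset.Ico a (b + 1) := by
  ext m; simp only [Finset.mem_filter, Finset.mem_range, Finset.mem_Ico, Nat.lt_succ_iff]
  constructor
  · rintro ⟨_, h⟩; exact h
  · rintro ⟨h1, h2⟩; exact ⟨lt_of_le_of_lt h2 hb, h1, h2⟩

lemma sum_filt_lt {K : ℕ} (f : Fin K → ℝ) {n : ℕ} (hn : n ≤ K) :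
    ∑ l ∈ Finset.univ.filter (fun l : Fin K => (l : ℕ) < n), f l
      = ∑ m ∈ Finset.range n, ext f m := by
  rw [sum_filt f (fun m => m < n), range_filter_lt hn]

lemma sum_filt_window {K : ℕ} (f : Fin K → ℝ) {a b : ℕ} (hb : b < K) :
    ∑ l ∈ Finset.univ.filter (fun l : Fin K => a ≤ (l : ℕ) ∧ (l : ℕ) ≤ b), f l
      = ∑ m ∈ Finset.Ico a (b + 1), ext f m := by
  rw [sum_filt f (fun m => a ≤ m ∧ m ≤ b), range_filter_window hb]

lemma sum_filt_univ {K : ℕ} (f : Fin K → ℝ) :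
    ∑ l ∈ Finset.univ.filter (fun l : Fin K => (l : ℕ) < K), f l = ∑ l, f l := by
  rw [Finset.filter_true_of_mem (fun l _ => l.isLt)]

/-- basic membership facts -/
lemma zero_mem_DK (K W g : ℕ) : (0 : Fin K → ℝ) ∈ DK K W g := by
  constructor
  · intro l; simp
  · intro k; simp

lemma zero_mem_DKplus (K W g : ℕ) : (0 : Fin K → ℝ) ∈ DKplus K W g :=
  ⟨zero_mem_DK K W g, fun l => le_refl _⟩

lemma DKplus_subset_DK {K W g : ℕ} : DKplus K W g ⊆ DK K W g := fun _ h => h.1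

lemma abs_mem_DKplus {K W g : ℕ} {δ : Fin K → ℝ} (h : δ ∈ DK K W g) :
    (fun l => |δ l|) ∈ DKplus K W g := by
  refine ⟨⟨fun l => by rw [abs_abs]; exact h.1 l, fun k => ?_⟩, fun l => abs_nonneg _⟩
  exact le_trans (le_of_eq (Finset.sum_congr rfl (fun l _ => abs_abs _))) (h.2 k)

lemma pos_mem_DKplus {K W g : ℕ} {δ : Fin K → ℝ} (h : δ ∈ DK K W g) :
    (fun l => max (δ l) 0) ∈ DKplus K W g := by
  refine ⟨⟨fun l => ?_, fun k => ?_⟩, fun l => le_max_right _ _⟩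
  · rw [abs_le]; constructor
    · exact le_trans (by linarith [abs_nonneg (δ l)]) (le_max_right (δ l) 0)
    · exact max_le ((abs_le.1 (h.1 l)).2) zero_le_one
  · refine le_trans (Finset.sum_le_sum (fun l _ => ?_)) (h.2 k)
    rw [abs_le]; constructor
    · exact le_trans (by linarith [abs_nonneg (δ l)]) (le_max_right (δ l) 0)
    · exact max_le (le_abs_self _) (abs_nonneg _)

lemma neg_mem_DK {K W g : ℕ} {γ : Fin K → ℝ} (h : γ ∈ DKplus K W g) :
    (fun l => -γ l) ∈ DK K W g := by
  refine ⟨fun l => by rw [abs_neg]; exact h.1.1 l, fun k => ?_⟩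
  refine le_trans (le_of_eq (Finset.sum_congr rfl (fun l _ => abs_neg _))) (h.1.2 k)

/-- single ±1 spike is in DK when 1 ≤ g -/
lemma spike_mem_DK {K W g : ℕ} (hg : 0 < g) (j : Fin K) (σ : ℝ) (hσ : |σ| ≤ 1) :
    (fun l => if l = j then σ else 0) ∈ DK K W g := by
  refine ⟨fun l => ?_, fun k => ?_⟩
  · by_cases h : l = j <;> simp [h, hσ]
  · calc ∑ l ∈ Finset.univ.filter _, |if l = j then σ else 0|
        ≤ ∑ l ∈ Finset.univ.filter (fun l : Fin K =>
            (k : ℕ) + 1 - W ≤ (l : ℕ) ∧ (l : ℕ) ≤ (k : ℕ)), (if l = j then 1 else 0) := by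
          refine Finset.sum_le_sum (fun l _ => ?_)
          by_cases h : l = j <;> simp [h, hσ]
      _ ≤ ∑ l : Fin K, (if l = j then (1:ℝ) else 0) := by
          refine Finset.sum_le_sum_of_subset_of_nonneg (Finset.filter_subset _ _) ?_
          intro l _ _; by_cases h : l = j <;> simp [h]
      _ = 1 := by simp
      _ ≤ g := by exact_mod_cast Nat.one_le_cast.2 hg

end Aux

namespace Aux

open Classical in
/-- Perturbation lemma: a point of `DKplus` with a non-{0,1} coordinate can be moved
in two opposite directions while staying in `DKplus`. -/
lemma exists_perturb {K W g : ℕ} {y : Fin K → ℝ} (hy : y ∈ DKplus K W g)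
    (l0 : Fin K) (h00 : y l0 ≠ 0) (h01 : y l0 ≠ 1) :
    ∃ d : Fin K → ℝ, d ≠ 0 ∧ (∀ l, |d l| ≤ 1) ∧
      ∃ ε : ℝ, 0 < ε ∧ ∀ σ : ℝ, |σ| ≤ ε → (fun l => y l + σ * d l) ∈ DKplus K W g := by
  classical
  obtain ⟨⟨habs, hwin⟩, hpos⟩ := hy
  have hy01 : ∀ l, 0 ≤ y l ∧ y l ≤ 1 := fun l => ⟨hpos l, (abs_le.1 (habs l)).2⟩
  -- prefix sums
  set Sf : ℕ → ℝ := fun n => ∑ m ∈ Finset.range n, ext y m with hSf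
  set intish : ℝ → Prop := fun x => ∃ z : ℤ, x = (z : ℝ) with hintish
  set p : ℕ → ℝ := fun n => if intish (Sf n) then 1 else 0 with hp
  set d : Fin K → ℝ := fun l => p ((l : ℕ) + 1) - p (l : ℕ) with hd
  have hSfsucc : ∀ n, Sf (n + 1) = Sf n + ext y n := fun n => Finset.sum_range_succ _ _
  have hintish_add : ∀ a b : ℝ, intish a → intish b → intish (a + b) := by
    rintro a b ⟨z1, rfl⟩ ⟨z2, rfl⟩; exact ⟨z1 + z2, by push_cast; ring⟩
  have hintish_sub : ∀ a b : ℝ, intish a → intish b → intish (a - b) := by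
    rintro a b ⟨z1, rfl⟩ ⟨z2, rfl⟩; exact ⟨z1 - z2, by push_cast; ring⟩
  -- if y l is an integer, d l = 0
  have hdzero : ∀ l : Fin K, intish (y l) → d l = 0 := by
    intro l hl
    have h1 : Sf ((l : ℕ) + 1) = Sf (l : ℕ) + y l := by rw [hSfsucc, ext_val]
    have : intish (Sf ((l : ℕ) + 1)) ↔ intish (Sf (l : ℕ)) := by
      constructor
      · intro h; have := hintish_sub _ _ h hl; rwa [h1, add_sub_cancel_right] at this
      · intro h; rw [h1]; exact hintish_add _ _ h hl
    simp only [hd, hp]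
    by_cases h : intish (Sf (l : ℕ)) <;> simp [h, this.2, fun hh => (this.1 hh)] <;> tauto
  have habs_d : ∀ l, |d l| ≤ 1 := by
    intro l; simp only [hd, hp]
    by_cases h1 : intish (Sf ((l : ℕ) + 1)) <;> by_cases h2 : intish (Sf (l : ℕ)) <;>
      simp [h1, h2]
  have hd_frac : ∀ l : Fin K, d l ≠ 0 → 0 < y l ∧ y l < 1 := by
    intro l hl
    have hni : ¬ intish (y l) := fun h => hl (hdzero l h)
    have h0 : y l ≠ 0 := fun h => hni ⟨0, by rw [h]; norm_num⟩
    have h1 : y l ≠ 1 := fun h => hni ⟨1, by rw [h]; norm_num⟩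
    exact ⟨lt_of_le_of_ne (hy01 l).1 (Ne.symm h0), lt_of_le_of_ne (hy01 l).2 h1⟩
  -- d ≠ 0
  have hfrac0 : ¬ intish (y l0) := by
    rintro ⟨z, hz⟩
    have h0 : (0:ℝ) ≤ (z:ℝ) := hz ▸ (hy01 l0).1
    have h1 : (z:ℝ) ≤ 1 := hz ▸ (hy01 l0).2
    have hz0 : 0 ≤ z := by exact_mod_cast h0
    have hz1 : z ≤ 1 := by exact_mod_cast h1
    interval_cases z
    · exact h00 (by rw [hz]; norm_num)
    · exact h01 (by rw [hz]; norm_num)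
  have hTne : (Finset.univ.filter (fun l : Fin K => ¬ intish (y l))).Nonempty :=
    ⟨l0, by simp [hfrac0]⟩
  set lstar : Fin K := (Finset.univ.filter (fun l : Fin K => ¬ intish (y l))).min' hTne
    with hlstar
  have hlstar_mem : ¬ intish (y lstar) := by
    have := (Finset.univ.filter (fun l : Fin K => ¬ intish (y l))).min'_mem hTne
    rw [← hlstar] at this; exact (Finset.mem_filter.1 this).2
  have hlstar_min : ∀ l : Fin K, (l : ℕ) < (lstar : ℕ) → intish (y l) := by
    intro l hl
    by_contra h
    have : lstar ≤ l := Finset.min'_le _ _ (by simp [h])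
    exact absurd hl (not_lt.2 this)
  have hSf_lstar : ∀ n, n ≤ (lstar : ℕ) → intish (Sf n) := by
    intro n hn
    induction n with
    | zero => exact ⟨0, by simp [hSf]⟩
    | succ k ih =>
      have hk : k < (lstar : ℕ) := hn
      have hkK : k < K := lt_trans hk lstar.isLt
      rw [hSfsucc]
      refine hintish_add _ _ (ih (le_of_lt hk)) ?_
      have : ext y k = y ⟨k, hkK⟩ := by simp [ext, hkK]
      rw [this]
      exact hlstar_min ⟨k, hkK⟩ hk
  have hd_lstar : d lstar = -1 := by
    have h1 : intish (Sf (lstar : ℕ)) := hSf_lstar _ le_rfl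
    have h2 : ¬ intish (Sf ((lstar : ℕ) + 1)) := by
      intro h
      have := hintish_sub _ _ h h1
      rw [hSfsucc, ext_val, add_sub_cancel_left] at this
      exact hlstar_mem this
    simp [hd, hp, h1, h2]
  have hdne : d ≠ 0 := by
    intro h
    have := congrFun h lstar
    rw [hd_lstar] at this; norm_num at this
  -- choose ε
  set Fsupp : Finset (Fin K) := Finset.univ.filter (fun l => d l ≠ 0) with hFsupp
  have hFne : Fsupp.Nonempty := ⟨lstar, by simp [hFsupp, hd_lstar]⟩
  set ε1 : ℝ := Fsupp.inf' hFne (fun l => min (y l) (1 - y l)) with hε1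
  have hε1pos : 0 < ε1 := by
    rw [hε1, Finset.lt_inf'_iff]
    intro l hl
    have := hd_frac l (by simpa [hFsupp] using hl)
    exact lt_min this.1 (by linarith [this.2])
  -- window sums
  set wsum : Fin K → ℝ := fun k => ∑ l ∈ Finset.univ.filter
    (fun l : Fin K => (k : ℕ) + 1 - W ≤ (l : ℕ) ∧ (l : ℕ) ≤ (k : ℕ)), y l with hwsum
  set NT : Finset (Fin K) := Finset.univ.filter (fun k => wsum k < g) with hNT
  set ε2 : ℝ := if h : NT.Nonempty then NT.inf' h (fun k => (g : ℝ) - wsum k) else 1 with hε2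
  have hε2pos : 0 < ε2 := by
    rw [hε2]
    split
    · rename_i h
      rw [Finset.lt_inf'_iff]
      intro k hk
      have : wsum k < g := by simpa [hNT] using hk
      linarith
    · norm_num
  refine ⟨d, hdne, habs_d, min ε1 ε2, lt_min hε1pos hε2pos, ?_⟩
  intro σ hσ
  -- pointwise bounds
  have hpt : ∀ l : Fin K, 0 ≤ y l + σ * d l ∧ y l + σ * d l ≤ 1 := by
    intro l
    by_cases h : d l = 0
    · simp [h]; exact hy01 l
    · have hf := hd_frac l h
      have h1 : |σ * d l| ≤ ε1 := by
        rw [abs_mul]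
        have := mul_le_mul (le_trans hσ (min_le_left _ _)) (habs_d l) (abs_nonneg _)
          (le_of_lt hε1pos)
        simpa using this
      have h2 : ε1 ≤ min (y l) (1 - y l) :=
        Finset.inf'_le _ (by simp [hFsupp, h])
      have h3 := abs_le.1 h1
      constructor
      · have := le_min_iff.1 h2
        linarith [this.1]
      · have := le_min_iff.1 h2
        linarith [this.2]
  refine ⟨⟨fun l => ?_, fun k => ?_⟩, fun l => (hpt l).1⟩
  · rw [abs_le]; exact ⟨le_trans (by norm_num) (hpt l).1, (hpt l).2⟩
  · -- window sum constraint
    have habseq : ∀ l : Fin K, |y l + σ * d l| = y l + σ * d l := fun l => abs_of_nonneg (hpt l).1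
    rw [Finset.sum_congr rfl (fun l _ => habseq l)]
    have hsplit : ∑ l ∈ Finset.univ.filter
        (fun l : Fin K => (k : ℕ) + 1 - W ≤ (l : ℕ) ∧ (l : ℕ) ≤ (k : ℕ)), (y l + σ * d l)
        = wsum k + σ * ∑ l ∈ Finset.univ.filter
          (fun l : Fin K => (k : ℕ) + 1 - W ≤ (l : ℕ) ∧ (l : ℕ) ≤ (k : ℕ)), d l := by
      rw [Finset.sum_add_distrib, Finset.mul_sum, hwsum]
    rw [hsplit]
    -- the d-window sum telescopes
    have hdwin : ∑ l ∈ Finset.univ.filter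
        (fun l : Fin K => (k : ℕ) + 1 - W ≤ (l : ℕ) ∧ (l : ℕ) ≤ (k : ℕ)), d l
        = p ((k : ℕ) + 1) - p ((k : ℕ) + 1 - W) := by
      rw [sum_filt_window d k.isLt]
      have hle : (k : ℕ) + 1 - W ≤ (k : ℕ) + 1 := Nat.sub_le _ _
      have : ∀ m ∈ Finset.Ico ((k : ℕ) + 1 - W) ((k : ℕ) + 1), ext d m = p (m + 1) - p m := by
        intro m hm
        have hmK : m < K := lt_of_lt_of_le (Finset.mem_Ico.1 hm).2 k.isLt
        simp [ext, hmK, hd]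
      rw [Finset.sum_congr rfl this, Finset.sum_Ico_eq_sub _ hle,
        Finset.sum_range_sub (fun n => p n), Finset.sum_range_sub (fun n => p n)]
      ring
    have hywin : wsum k = Sf ((k : ℕ) + 1) - Sf ((k : ℕ) + 1 - W) := by
      have hle : (k : ℕ) + 1 - W ≤ (k : ℕ) + 1 := Nat.sub_le _ _
      simp only [hwsum]
      rw [sum_filt_window y k.isLt, Finset.sum_Ico_eq_sub _ hle]
    by_cases htight : wsum k < g
    · -- non-tight window
      have hε2le : ε2 ≤ (g : ℝ) - wsum k := by
        rw [hε2]
        have hne : NT.Nonempty := ⟨k, by simp [hNT, htight]⟩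
        rw [dif_pos hne]
        exact Finset.inf'_le _ (by simp [hNT, htight])
      have hb : |σ * (p ((k : ℕ) + 1) - p ((k : ℕ) + 1 - W))| ≤ ε2 := by
        rw [abs_mul]
        have h1 : |p ((k : ℕ) + 1) - p ((k : ℕ) + 1 - W)| ≤ 1 := by
          simp only [hp]
          by_cases i1 : intish (Sf ((k : ℕ) + 1)) <;>
            by_cases i2 : intish (Sf ((k : ℕ) + 1 - W)) <;> simp [i1, i2]
        have := mul_le_mul (le_trans hσ (min_le_right _ _)) h1 (abs_nonneg _)
          (le_of_lt hε2pos)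
        simpa using this
      rw [hdwin]
      have := (abs_le.1 hb).2
      linarith
    · -- tight window: d-window sum vanishes
      have hwle : wsum k ≤ g := by
        have h' : wsum k = ∑ l ∈ Finset.univ.filter
            (fun l : Fin K => (k : ℕ) + 1 - W ≤ (l : ℕ) ∧ (l : ℕ) ≤ (k : ℕ)), |y l| := by
          simp only [hwsum]
          exact Finset.sum_congr rfl (fun l _ => (abs_of_nonneg (hpos l)).symm)
        rw [h']; exact hwin k
      have heq : wsum k = g := le_antisymm hwle (not_lt.1 htight)
      have hZ : intish (Sf ((k : ℕ) + 1) - Sf ((k : ℕ) + 1 - W)) := by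
        rw [← hywin, heq]; exact ⟨(g : ℤ), by push_cast; ring⟩
      have hiff : intish (Sf ((k : ℕ) + 1)) ↔ intish (Sf ((k : ℕ) + 1 - W)) := by
        constructor
        · intro h
          have := hintish_sub _ _ h hZ
          simpa using this
        · intro h
          have := hintish_add _ _ hZ h
          simpa using this
      have hp0 : p ((k : ℕ) + 1) - p ((k : ℕ) + 1 - W) = 0 := by
        simp only [hp]
        by_cases h : intish (Sf ((k : ℕ) + 1))
        · simp [h, hiff.1 h]
        · have h2 : ¬ intish (Sf ((k : ℕ) + 1 - W)) := fun hh => h (hiff.2 hh)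
          simp [h, h2]
      rw [hdwin, hp0, mul_zero, add_zero, heq]

end Aux

namespace Aux

lemma DKplus_isClosed (K W g : ℕ) : IsClosed (DKplus K W g) := by
  have h1 : IsClosed {δ : Fin K → ℝ | ∀ l, |δ l| ≤ 1} := by
    have : {δ : Fin K → ℝ | ∀ l, |δ l| ≤ 1} = ⋂ l, {δ : Fin K → ℝ | |δ l| ≤ 1} := by
      ext δ; simp
    rw [this]
    exact isClosed_iInter (fun l =>
      IsClosed.preimage ((continuous_apply l).abs) isClosed_Iic)
  have h2 : IsClosed {δ : Fin K → ℝ | ∀ k : Fin K,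
      (∑ l ∈ Finset.univ.filter
        (fun l : Fin K => (k : ℕ) + 1 - W ≤ (l : ℕ) ∧ (l : ℕ) ≤ (k : ℕ)), |δ l|) ≤ (g : ℝ)} := by
    have : {δ : Fin K → ℝ | ∀ k : Fin K,
        (∑ l ∈ Finset.univ.filter
          (fun l : Fin K => (k : ℕ) + 1 - W ≤ (l : ℕ) ∧ (l : ℕ) ≤ (k : ℕ)), |δ l|) ≤ (g : ℝ)}
        = ⋂ k : Fin K, {δ : Fin K → ℝ |
          (∑ l ∈ Finset.univ.filter
            (fun l : Fin K => (k : ℕ) + 1 - W ≤ (l : ℕ) ∧ (l : ℕ) ≤ (k : ℕ)), |δ l|) ≤ (g : ℝ)} := by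
      ext δ; simp
    rw [this]
    refine isClosed_iInter (fun k => isClosed_le ?_ continuous_const)
    exact continuous_finset_sum _ (fun l _ => (continuous_apply l).abs)
  have h3 : IsClosed {δ : Fin K → ℝ | ∀ l, 0 ≤ δ l} := by
    have : {δ : Fin K → ℝ | ∀ l, 0 ≤ δ l} = ⋂ l, {δ : Fin K → ℝ | 0 ≤ δ l} := by
      ext δ; simp
    rw [this]
    exact isClosed_iInter (fun l => IsClosed.preimage (continuous_apply l) isClosed_Ici)
  exact ((h1.inter h2).inter h3)

lemma DKplus_isCompact (K W g : ℕ) : IsCompact (DKplus K W g) := by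
  refine IsCompact.of_isClosed_subset (isCompact_Icc (a := (0 : Fin K → ℝ)) (b := 1))
    (DKplus_isClosed K W g) ?_
  rintro δ ⟨⟨habs, _⟩, hpos⟩
  constructor
  · intro l; exact hpos l
  · intro l; exact (abs_le.1 (habs l)).2

/-- The key integrality lemma: for nonnegative weights, every point of `DKplus` is
dominated by a 0/1 point of `DKplus`. -/
lemma exists_int_dominating {K W g : ℕ} (c : Fin K → ℝ) (hc : ∀ l, 0 ≤ c l)
    {δ : Fin K → ℝ} (hδ : δ ∈ DKplus K W g) :
    ∃ γ ∈ DKplus K W g, (∀ l, γ l = 0 ∨ γ l = 1) ∧ ∑ l, c l * δ l ≤ ∑ l, c l * γ l := by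
  classical
  have hcpt := DKplus_isCompact K W g
  have hne : (DKplus K W g).Nonempty := ⟨δ, hδ⟩
  have hcont : Continuous (fun x : Fin K → ℝ => ∑ l, c l * x l) :=
    continuous_finset_sum _ (fun l _ => continuous_const.mul (continuous_apply l))
  obtain ⟨x0, hx0S, hx0max⟩ := hcpt.exists_isMaxOn hne hcont.continuousOn
  set M : Set (Fin K → ℝ) := DKplus K W g ∩ {x | ∑ l, c l * x0 l ≤ ∑ l, c l * x l} with hM
  have hMclosed : IsClosed {x : Fin K → ℝ | ∑ l, c l * x0 l ≤ ∑ l, c l * x l} :=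
    IsClosed.preimage hcont isClosed_Ici
  have hMcpt : IsCompact M := hcpt.inter_right hMclosed
  have hx0M : x0 ∈ M := by
    refine ⟨hx0S, ?_⟩
    show ∑ l, c l * x0 l ≤ ∑ l, c l * x0 l
    exact le_rfl
  have hMne : M.Nonempty := ⟨x0, hx0M⟩
  have hqcont : Continuous (fun x : Fin K → ℝ => ∑ l, (x l) ^ 2) :=
    continuous_finset_sum _ (fun l _ => (continuous_apply l).pow 2)
  obtain ⟨y, hyM, hymax⟩ := hMcpt.exists_isMaxOn hMne hqcont.continuousOn
  have hyS : y ∈ DKplus K W g := hyM.1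
  have hfy : ∑ l, c l * y l = ∑ l, c l * x0 l :=
    le_antisymm (hx0max hyS) hyM.2
  refine ⟨y, hyS, ?_, le_trans (hx0max hδ) (le_of_eq hfy.symm)⟩
  by_contra hcon
  push_neg at hcon
  obtain ⟨l0, h00, h01⟩ := hcon
  obtain ⟨dd, hdne, habsd, ε, hεpos, hmem⟩ := exists_perturb hyS l0 h00 h01
  have hplus := hmem ε (by rw [abs_of_pos hεpos])
  have hminus := hmem (-ε) (by rw [abs_neg, abs_of_pos hεpos])
  -- linear functional values
  have hexp : ∀ σ : ℝ, ∑ l, c l * (y l + σ * dd l)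
      = ∑ l, c l * y l + σ * ∑ l, c l * dd l := by
    intro σ
    rw [Finset.mul_sum, ← Finset.sum_add_distrib]
    exact Finset.sum_congr rfl (fun l _ => by ring)
  have hle1 : ∑ l, c l * (y l + ε * dd l) ≤ ∑ l, c l * x0 l := hx0max hplus
  have hle2 : ∑ l, c l * (y l + (-ε) * dd l) ≤ ∑ l, c l * x0 l := hx0max hminus
  rw [hexp, hfy] at hle1 hle2
  have hcd : ∑ l, c l * dd l = 0 := by nlinarith
  have hMp : (fun l => y l + ε * dd l) ∈ M := by
    refine ⟨hplus, ?_⟩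
    show ∑ l, c l * x0 l ≤ ∑ l, c l * (y l + ε * dd l)
    rw [hexp, hfy, hcd]; simp
  have hMm : (fun l => y l + (-ε) * dd l) ∈ M := by
    refine ⟨hminus, ?_⟩
    show ∑ l, c l * x0 l ≤ ∑ l, c l * (y l + (-ε) * dd l)
    rw [hexp, hfy, hcd]; simp
  have hq1 : ∑ l, (y l + ε * dd l) ^ 2 ≤ ∑ l, (y l) ^ 2 := hymax hMp
  have hq2 : ∑ l, (y l + (-ε) * dd l) ^ 2 ≤ ∑ l, (y l) ^ 2 := hymax hMm
  have hqsum : ∑ l, (y l + ε * dd l) ^ 2 + ∑ l, (y l + (-ε) * dd l) ^ 2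
      = 2 * ∑ l, (y l) ^ 2 + 2 * ε ^ 2 * ∑ l, (dd l) ^ 2 := by
    rw [← Finset.sum_add_distrib, Finset.mul_sum, Finset.mul_sum, ← Finset.sum_add_distrib]
    exact Finset.sum_congr rfl (fun l _ => by ring)
  have hdd0 : ∑ l, (dd l) ^ 2 ≤ 0 := by
    have h1 := hqsum
    nlinarith [sq_nonneg ε, hεpos, mul_pos hεpos hεpos]
  have : ∀ l, dd l = 0 := by
    intro l
    have h := Finset.sum_nonneg (fun l' (_ : l' ∈ Finset.univ) => sq_nonneg (dd l'))
    have hz : ∑ l, (dd l) ^ 2 = 0 := le_antisymm hdd0 h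
    have := (Finset.sum_eq_zero_iff_of_nonneg
      (fun l' (_ : l' ∈ Finset.univ) => sq_nonneg (dd l'))).1 hz l (Finset.mem_univ l)
    exact pow_eq_zero_iff (n := 2) (by norm_num) |>.1 this
  exact hdne (funext this)

end Aux

namespace Aux

section Terms
variable {ηp ηm xb xr : ℝ}

/-- h(t) for t ≥ 0 equals the linear charging expression. -/
lemma hterm_eq (hxb : 0 ≤ xb) (hxr : 0 ≤ xr) {t : ℝ} (ht : 0 ≤ t) :
    ηp * max (xb + t * xr) 0 - (1 / ηm) * max (-(xb + t * xr)) 0 = ηp * (xb + t * xr) := by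
  have hs : 0 ≤ xb + t * xr := by positivity
  rw [max_eq_left hs, max_eq_right (by linarith), mul_zero, sub_zero]

/-- h(t) ≤ η⁺(xb + [t]⁺ xr). -/
lemma hterm_le_upper (hηp : 0 < ηp) (hηm : 0 < ηm) (hxb : 0 ≤ xb) (hxr : 0 ≤ xr) (t : ℝ) :
    ηp * max (xb + t * xr) 0 - (1 / ηm) * max (-(xb + t * xr)) 0
      ≤ ηp * (xb + max t 0 * xr) := by
  rcases le_or_gt 0 (xb + t * xr) with hs | hs
  · rw [max_eq_left hs, max_eq_right (by linarith), mul_zero, sub_zero]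
    have h1 : t ≤ max t 0 := le_max_left _ _
    have h2 : t * xr ≤ max t 0 * xr := mul_le_mul_of_nonneg_right h1 hxr
    nlinarith
  · rw [max_eq_right (le_of_lt hs)]
    have h1 : 0 ≤ max (-(xb + t * xr)) 0 := le_max_right _ _
    have h2 : 0 ≤ (1 / ηm) * max (-(xb + t * xr)) 0 := by positivity
    have h3 : 0 ≤ max t 0 := le_max_right _ _
    have h4 : 0 ≤ ηp * (xb + max t 0 * xr) := by positivity
    linarith [mul_zero ηp]
  
/-- lower bound: η⁺xb − m|t| ≤ h(t) when m dominates both linear forms. -/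
lemma hterm_ge_lower (hηp : 0 < ηp) (hηp1 : ηp ≤ 1) (hηm : 0 < ηm) (hηm1 : ηm ≤ 1)
    (hxb : 0 ≤ xb) (hxr : 0 ≤ xr) {m t : ℝ}
    (hm1 : ηp * xr ≤ m) (hm2 : (1 / ηm) * xr - (1 / ηm - ηp) * xb ≤ m) (ht : |t| ≤ 1) :
    ηp * xb - m * |t| ≤ ηp * max (xb + t * xr) 0 - (1 / ηm) * max (-(xb + t * xr)) 0 := by
  have hinv : 1 ≤ 1 / ηm := by rw [le_div_iff₀ hηm]; linarith
  have habs := abs_nonneg t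
  have h1 := le_abs_self t
  have h2 := neg_abs_le t
  rcases le_or_gt 0 (xb + t * xr) with hs | hs
  · rw [max_eq_left hs, max_eq_right (by linarith), mul_zero, sub_zero]
    have hA : |t| * (ηp * xr) ≤ |t| * m := mul_le_mul_of_nonneg_left hm1 habs
    have hB : ηp * xr * (-|t|) ≤ ηp * xr * t :=
      mul_le_mul_of_nonneg_left h2 (mul_nonneg hηp.le hxr)
    nlinarith
  · rw [max_eq_right (le_of_lt hs), max_eq_left (by linarith), mul_zero, zero_sub]
    have htneg : t < 0 := by nlinarith
    have habs_eq : |t| = -t := abs_of_neg htneg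
    have hA : |t| * ((1 / ηm) * xr - (1 / ηm - ηp) * xb) ≤ |t| * m :=
      mul_le_mul_of_nonneg_left hm2 habs
    have ht1 : -1 ≤ t := (abs_le.1 ht).1
    have hC : 0 ≤ (1 + t) * ((1 / ηm - ηp) * xb) :=
      mul_nonneg (by linarith) (mul_nonneg (by linarith) hxb)
    rw [habs_eq] at hA ⊢
    nlinarith
  
/-- for a 0/1 value γ : h(−γ) ≤ η⁺xb − m*γ with m* the max of the two linear forms. -/
lemma hterm_neg_le (hηp : 0 < ηp) (hηp1 : ηp ≤ 1) (hηm : 0 < ηm) (hηm1 : ηm ≤ 1)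
    (hxb : 0 ≤ xb) (hxr : 0 ≤ xr) {γ : ℝ} (hγ : γ = 0 ∨ γ = 1) :
    ηp * max (xb + (-γ) * xr) 0 - (1 / ηm) * max (-(xb + (-γ) * xr)) 0
      ≤ ηp * xb - max (ηp * xr) ((1 / ηm) * xr - (1 / ηm - ηp) * xb) * γ := by
  have hinv : 1 ≤ 1 / ηm := by rw [le_div_iff₀ hηm]; linarith
  rcases hγ with rfl | rfl
  · rw [hterm_eq hxb hxr (by norm_num : (0:ℝ) ≤ -0)]
    simp
  · rcases le_or_gt 0 (xb + (-1) * xr) with hs | hs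
    · have hM : max (ηp * xr) ((1 / ηm) * xr - (1 / ηm - ηp) * xb) = ηp * xr :=
        max_eq_left (by nlinarith)
      rw [max_eq_left hs, max_eq_right (by linarith), mul_zero, sub_zero, hM]
      ring_nf
      linarith [le_refl (ηp * xb)]
    · have hM : max (ηp * xr) ((1 / ηm) * xr - (1 / ηm - ηp) * xb)
          = (1 / ηm) * xr - (1 / ηm - ηp) * xb :=
        max_eq_right (by nlinarith)
      rw [max_eq_right (le_of_lt hs), max_eq_left (by linarith), mul_zero, zero_sub, hM]
      ring_nf
      linarith [le_refl (ηp * xb)]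

end Terms

end Aux

namespace Aux

section Ysoc
variable {K : ℕ} {Δt ηp ηm : ℝ} {xb xr d : Fin K → ℝ}

lemma ysoc_eq_plus (hxb : ∀ l, 0 ≤ xb l) (hxr : ∀ l, 0 ≤ xr l)
    {δ : Fin K → ℝ} (hδ : ∀ l, 0 ≤ δ l) (y0 : ℝ) (k : ℕ) :
    ysoc Δt ηp ηm xb xr δ d y0 k
      = y0 + Δt * ∑ l ∈ Finset.univ.filter (fun l : Fin K => (l : ℕ) < k),
        (ηp * (xb l + δ l * xr l) - d l) := by
  unfold ysoc
  congr 1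
  congr 1
  refine Finset.sum_congr rfl (fun l _ => ?_)
  have h := hterm_eq (ηm := ηm) (ηp := ηp) (hxb l) (hxr l) (hδ l)
  linarith

lemma ysoc_le_plus (hΔt : 0 ≤ Δt) (hηp : 0 < ηp) (hηm : 0 < ηm)
    (hxb : ∀ l, 0 ≤ xb l) (hxr : ∀ l, 0 ≤ xr l)
    (δ : Fin K → ℝ) {y0 y0' : ℝ} (hy : y0 ≤ y0') (k : ℕ) :
    ysoc Δt ηp ηm xb xr δ d y0 k
      ≤ y0' + Δt * ∑ l ∈ Finset.univ.filter (fun l : Fin K => (l : ℕ) < k),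
        (ηp * (xb l + max (δ l) 0 * xr l) - d l) := by
  unfold ysoc
  refine add_le_add hy (mul_le_mul_of_nonneg_left (Finset.sum_le_sum (fun l _ => ?_)) hΔt)
  have h := hterm_le_upper (ηm := ηm) hηp hηm (hxb l) (hxr l) (δ l)
  linarith

lemma ysoc_ge_lower (hΔt : 0 ≤ Δt) (hηp : 0 < ηp) (hηp1 : ηp ≤ 1)
    (hηm : 0 < ηm) (hηm1 : ηm ≤ 1)
    (hxb : ∀ l, 0 ≤ xb l) (hxr : ∀ l, 0 ≤ xr l) {m : Fin K → ℝ}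
    (hm : ∀ l, ηp * xr l ≤ m l ∧ (1 / ηm) * xr l - (1 / ηm - ηp) * xb l ≤ m l)
    {δ : Fin K → ℝ} (habs : ∀ l, |δ l| ≤ 1) {y0 y0' : ℝ} (hy : y0' ≤ y0) (k : ℕ) :
    y0' + Δt * ∑ l ∈ Finset.univ.filter (fun l : Fin K => (l : ℕ) < k),
        (ηp * xb l - m l * |δ l| - d l)
      ≤ ysoc Δt ηp ηm xb xr δ d y0 k := by
  unfold ysoc
  refine add_le_add hy (mul_le_mul_of_nonneg_left (Finset.sum_le_sum (fun l _ => ?_)) hΔt)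
  have h := hterm_ge_lower hηp hηp1 hηm hηm1 (hxb l) (hxr l) (hm l).1 (hm l).2 (habs l)
  linarith

lemma ysoc_neg_le (hΔt : 0 ≤ Δt) (hηp : 0 < ηp) (hηp1 : ηp ≤ 1)
    (hηm : 0 < ηm) (hηm1 : ηm ≤ 1)
    (hxb : ∀ l, 0 ≤ xb l) (hxr : ∀ l, 0 ≤ xr l)
    {γ : Fin K → ℝ} (hγ : ∀ l, γ l = 0 ∨ γ l = 1) {y0 y0' : ℝ} (hy : y0 ≤ y0') (k : ℕ) :
    ysoc Δt ηp ηm xb xr (fun l => -γ l) d y0 k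
      ≤ y0' + Δt * ∑ l ∈ Finset.univ.filter (fun l : Fin K => (l : ℕ) < k),
        (ηp * xb l - max (ηp * xr l) ((1 / ηm) * xr l - (1 / ηm - ηp) * xb l) * γ l - d l) := by
  unfold ysoc
  refine add_le_add hy (mul_le_mul_of_nonneg_left (Finset.sum_le_sum (fun l _ => ?_)) hΔt)
  have h := hterm_neg_le hηp hηp1 hηm hηm1 (hxb l) (hxr l) (hγ l)
  linarith

lemma abs_ysoc_sub_le (hΔt : 0 ≤ Δt) (hηp : 0 < ηp) (hηm : 0 < ηm)
    (hxb : ∀ l, 0 ≤ xb l) (hxr : ∀ l, 0 ≤ xr l)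
    {δ : Fin K → ℝ} (habs : ∀ l, |δ l| ≤ 1) {ylh yuh y0 ystar : ℝ}
    (hy0 : y0 ∈ Set.Icc ylh yuh) (k : ℕ) :
    |ysoc Δt ηp ηm xb xr δ d y0 k - ystar|
      ≤ |ylh| + |yuh| + |ystar|
        + Δt * ∑ l, ((ηp + 1 / ηm) * (xb l + xr l) + |d l|) := by
  have hy0abs : |y0| ≤ |ylh| + |yuh| := by
    rw [abs_le]
    constructor
    · have := hy0.1
      have h2 := neg_abs_le ylh
      have h3 := abs_nonneg yuh
      linarith
    · have := hy0.2
      have h2 := le_abs_self yuh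
      have h3 := abs_nonneg ylh
      linarith
  have hterm : ∀ l : Fin K,
      |ηp * max (xb l + δ l * xr l) 0 - (1 / ηm) * max (-(xb l + δ l * xr l)) 0 - d l|
        ≤ (ηp + 1 / ηm) * (xb l + xr l) + |d l| := by
    intro l
    have hd1 := abs_le.1 (habs l)
    have hb1 : max (xb l + δ l * xr l) 0 ≤ xb l + xr l := by
      refine max_le ?_ (by linarith [hxb l, hxr l])
      nlinarith [hxr l]
    have hb2 : max (-(xb l + δ l * xr l)) 0 ≤ xb l + xr l := by
      refine max_le ?_ (by linarith [hxb l, hxr l])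
      nlinarith [hxr l, hxb l]
    have hn1 : (0:ℝ) ≤ max (xb l + δ l * xr l) 0 := le_max_right _ _
    have hn2 : (0:ℝ) ≤ max (-(xb l + δ l * xr l)) 0 := le_max_right _ _
    have hda := le_abs_self (d l)
    have hdb := neg_abs_le (d l)
    have him : (0:ℝ) ≤ 1 / ηm := by positivity
    have hxx : (0:ℝ) ≤ xb l + xr l := add_nonneg (hxb l) (hxr l)
    rw [abs_le]
    constructor
    · have hA := mul_le_mul_of_nonneg_left hb2 him
      have hB := mul_nonneg hηp.le hn1
      have hC := mul_nonneg hηp.le hxx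
      linarith
    · have hA := mul_le_mul_of_nonneg_left hb1 hηp.le
      have hB := mul_nonneg him hn2
      have hC := mul_nonneg him hxx
      linarith
  unfold ysoc
  have hsum : |∑ l ∈ Finset.univ.filter (fun l : Fin K => (l : ℕ) < k),
      (ηp * max (xb l + δ l * xr l) 0 - (1 / ηm) * max (-(xb l + δ l * xr l)) 0 - d l)|
      ≤ ∑ l, ((ηp + 1 / ηm) * (xb l + xr l) + |d l|) := by
    refine le_trans (Finset.abs_sum_le_sum_abs _ _) ?_
    refine le_trans (Finset.sum_le_sum (fun l _ => hterm l)) ?_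
    refine Finset.sum_le_sum_of_subset_of_nonneg (Finset.filter_subset _ _) (fun l _ _ => ?_)
    have h1 : (0:ℝ) ≤ (ηp + 1/ηm) * (xb l + xr l) :=
      mul_nonneg (by positivity) (add_nonneg (hxb l) (hxr l))
    have h2 := abs_nonneg (d l)
    linarith
  have h1 := le_abs_self y0
  have h2 := neg_abs_le y0
  have h3 := le_abs_self ystar
  have h4 := neg_abs_le ystar
  have h5 := (abs_le.1 hsum)
  have h6 : Δt * ∑ l ∈ Finset.univ.filter (fun l : Fin K => (l : ℕ) < k),
      (ηp * max (xb l + δ l * xr l) 0 - (1 / ηm) * max (-(xb l + δ l * xr l)) 0 - d l)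
      ≤ Δt * ∑ l, ((ηp + 1 / ηm) * (xb l + xr l) + |d l|) :=
    mul_le_mul_of_nonneg_left h5.2 hΔt
  have h7 : - (Δt * ∑ l, ((ηp + 1 / ηm) * (xb l + xr l) + |d l|))
      ≤ Δt * ∑ l ∈ Finset.univ.filter (fun l : Fin K => (l : ℕ) < k),
      (ηp * max (xb l + δ l * xr l) 0 - (1 / ηm) * max (-(xb l + δ l * xr l)) 0 - d l) := by
    have := mul_le_mul_of_nonneg_left h5.1 hΔt
    nlinarith
  rw [abs_le]
  constructor <;> [skip; skip] <;> [linarith; linarith]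

end Ysoc

lemma sInf_eq_sInf_of {A B : Set ℝ} (hAB : A ⊆ B) (h : ∀ v ∈ B, ∃ v' ∈ A, v' ≤ v) :
    sInf A = sInf B := by
  rcases A.eq_empty_or_nonempty with hA | hA
  · have hB : B = ∅ := by
      rcases B.eq_empty_or_nonempty with hB | ⟨v, hv⟩
      · exact hB
      · obtain ⟨v', hv', _⟩ := h v hv
        rw [hA] at hv'; exact absurd hv' (Set.notMem_empty v')
    rw [hA, hB]
  · have hB : B.Nonempty := hA.mono hAB
    by_cases hbdd : BddBelow B
    · have hbddA : BddBelow A := hbdd.mono hAB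
      refine le_antisymm ?_ (csInf_le_csInf hbdd hA hAB)
      refine le_csInf hB (fun v hv => ?_)
      obtain ⟨v', hv', hle⟩ := h v hv
      exact le_trans (csInf_le hbddA hv') hle
    · have hbddA : ¬ BddBelow A := by
        intro hA'
        refine hbdd ?_
        obtain ⟨b, hb⟩ := hA'
        refine ⟨b, fun v hv => ?_⟩
        obtain ⟨v', hv', hle⟩ := h v hv
        exact le_trans (hb hv') hle
      rw [Real.sInf_of_not_bddBelow hbddA, Real.sInf_of_not_bddBelow hbdd]

end Aux

namespace Aux

/-- The optimal reserve capacity `m*`. -/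
def mstar (ηp ηm : ℝ) {K : ℕ} (xb xr : Fin K → ℝ) : Fin K → ℝ :=
  fun l => max (ηp * xr l) ((1 / ηm) * xr l - (1 / ηm - ηp) * xb l)

lemma mstar_nonneg {ηp ηm : ℝ} {K : ℕ} {xb xr : Fin K → ℝ} (hηp : 0 < ηp)
    (hxr : ∀ l, 0 ≤ xr l) (l : Fin K) : 0 ≤ mstar ηp ηm xb xr l :=
  le_trans (mul_nonneg hηp.le (hxr l)) (le_max_left _ _)

lemma ysoc_neg_le' {K : ℕ} {Δt ηp ηm : ℝ} {xb xr d : Fin K → ℝ}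
    (hΔt : 0 ≤ Δt) (hηp : 0 < ηp) (hηp1 : ηp ≤ 1)
    (hηm : 0 < ηm) (hηm1 : ηm ≤ 1)
    (hxb : ∀ l, 0 ≤ xb l) (hxr : ∀ l, 0 ≤ xr l)
    {γ : Fin K → ℝ} (hγ : ∀ l, γ l = 0 ∨ γ l = 1) {y0 y0' : ℝ} (hy : y0 ≤ y0') (k : ℕ) :
    ysoc Δt ηp ηm xb xr (fun l => -γ l) d y0 k
      ≤ y0' + Δt * ∑ l ∈ Finset.univ.filter (fun l : Fin K => (l : ℕ) < k),
        (ηp * xb l - mstar ηp ηm xb xr l * γ l - d l) :=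
  ysoc_neg_le hΔt hηp hηp1 hηm hηm1 hxb hxr hγ hy k

end Aux

namespace Aux

open Pointwise in
lemma sSup_scaled {c : ℝ} (hc : 0 ≤ c) (S T : Set ℝ)
    (h1 : ∀ x ∈ S, c * x ∈ T) (h2 : ∀ w ∈ T, ∃ x ∈ S, w = c * x) : sSup T = c * sSup S := by
  have hTS : T = c • S := by
    ext w
    rw [Set.mem_smul_set]
    constructor
    · intro hw
      obtain ⟨x, hx, rfl⟩ := h2 w hw
      exact ⟨x, hx, by rw [smul_eq_mul]⟩
    · rintro ⟨x, hx, rfl⟩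
      simpa [smul_eq_mul] using h1 x hx
  rw [hTS, Real.sSup_smul_of_nonneg hc, smul_eq_mul]

end Aux


/-- Theorem 2, lossless linearization: the non-convex robust
problem (R_K) and the linear robust problem (R'_K) have the same optimal value. -/
theorem stmt_18 (Δt : ℝ) (K W g Wh gh : ℕ) (hΔt : 0 < Δt) (hK : 0 < K)
    (hg : 0 < g) (hgW : g ≤ W) (hWK : W ≤ K)
    (hgh : 0 < gh) (hghWh : gh ≤ Wh) (hWhK : Wh ≤ K)
    (ηp ηm : ℝ) (hηp : ηp ∈ Ioc (0:ℝ) 1) (hηm : ηm ∈ Ioc (0:ℝ) 1)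
    (d : Fin K → ℝ) (ylo yhi : ℝ) (hy : ylo ≤ yhi)
    (yl0 yu0 : ℝ) (hy0 : yl0 ≤ yu0) (ylh yuh : ℝ) (hyh : ylh ≤ yuh)
    (ybarp ybarm : Fin K → ℝ) (hybarp : ∀ l, 0 ≤ ybarp l) (hybarm : ∀ l, 0 ≤ ybarm l)
    (ystar pstar : ℝ) (hpstar : 0 ≤ pstar)
    (XK : Set ((Fin K → ℝ) × (Fin K → ℝ)))
    (hXK : ∀ p ∈ XK, (∀ l, 0 ≤ p.1 l) ∧ (∀ l, 0 ≤ p.2 l))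
    (cK : (Fin K → ℝ) × (Fin K → ℝ) → ℝ) (hcK : IsLinearMap ℝ cK) :
    sInf {v : ℝ | ∃ p ∈ XK,
        (∀ δ ∈ DK K W g, ∀ j : Fin K,
          max (p.1 j + δ j * p.2 j) 0 ≤ ybarp j ∧
          max (-(p.1 j + δ j * p.2 j)) 0 ≤ ybarm j) ∧
        (∀ δ ∈ DK K W g, ∀ k ≤ K, ∀ y0 ∈ Icc yl0 yu0,
          ylo ≤ ysoc Δt ηp ηm p.1 p.2 δ d y0 k ∧
          ysoc Δt ηp ηm p.1 p.2 δ d y0 k ≤ yhi) ∧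
        v = cK p + sSup {w : ℝ | ∃ δ ∈ DK K Wh gh, ∃ y0 ∈ Icc ylh yuh,
          w = pstar * |ysoc Δt ηp ηm p.1 p.2 δ d y0 K - ystar|}} =
      sInf {v : ℝ | ∃ p ∈ XK, ∃ m : Fin K → ℝ, ∃ z : ℝ,
        RprimeFeasible Δt ηp ηm W g Wh gh d ybarp ybarm
          ylo yhi yl0 yu0 ylh yuh ystar p m z ∧
        v = cK p + pstar * z} := by
  classical
  obtain ⟨hηp0, hηp1⟩ := hηp
  obtain ⟨hηm0, hηm1⟩ := hηm
  refine Aux.sInf_eq_sInf_of ?_ ?_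
  · -- A ⊆ B : every feasible point of (R_K) gives a feasible point of (R'_K) of equal value
    rintro v ⟨p, hpX, hch, hsoc, hv⟩
    obtain ⟨hxb, hxr⟩ := hXK p hpX
    set Sabs : Set ℝ := {w : ℝ | ∃ δ ∈ DK K Wh gh, ∃ y0 ∈ Icc ylh yuh,
      w = |ysoc Δt ηp ηm p.1 p.2 δ d y0 K - ystar|} with hSabsdef
    have hSabs_ne : Sabs.Nonempty :=
      ⟨_, 0, Aux.zero_mem_DK K Wh gh, ylh, ⟨le_rfl, hyh⟩, rfl⟩
    have hSabs_bdd : BddAbove Sabs := by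
      refine ⟨|ylh| + |yuh| + |ystar| + Δt * ∑ l, ((ηp + 1 / ηm) * (p.1 l + p.2 l) + |d l|), ?_⟩
      rintro w ⟨δ, hδ, y0, hy0, rfl⟩
      exact Aux.abs_ysoc_sub_le hΔt.le hηp0 hηm0 hxb hxr hδ.1 hy0 K
    have hScaled : sSup {w : ℝ | ∃ δ ∈ DK K Wh gh, ∃ y0 ∈ Icc ylh yuh,
        w = pstar * |ysoc Δt ηp ηm p.1 p.2 δ d y0 K - ystar|} = pstar * sSup Sabs := by
      refine Aux.sSup_scaled hpstar Sabs _ ?_ ?_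
      · rintro x ⟨δ, hδ, y0, hy0, rfl⟩
        exact ⟨δ, hδ, y0, hy0, rfl⟩
      · rintro w ⟨δ, hδ, y0, hy0, rfl⟩
        exact ⟨_, ⟨δ, hδ, y0, hy0, rfl⟩, rfl⟩
    refine ⟨p, hpX, Aux.mstar ηp ηm p.1 p.2, sSup Sabs, ⟨?_, ?_, ?_, ?_, ?_, ?_⟩, ?_⟩
    · -- (i) charger bounds
      intro j
      have h1 := (hch (fun l => if l = j then (1:ℝ) else 0)
        (Aux.spike_mem_DK hg j 1 (by norm_num)) j).1
      have h2 := (hch (fun l => if l = j then (-1:ℝ) else 0)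
        (Aux.spike_mem_DK hg j (-1) (by norm_num)) j).2
      simp only [eq_self_iff_true, if_true, one_mul] at h1 h2
      constructor
      · have hmax : (p.1 j + p.2 j) ⊔ 0 = p.1 j + p.2 j :=
          max_eq_left (by linarith [hxb j, hxr j])
        rw [hmax] at h1; linarith
      · have h3 : p.2 j - p.1 j ≤ -(p.1 j + (-1) * p.2 j) ⊔ 0 :=
          le_trans (le_of_eq (by ring)) (le_max_left _ _)
        exact le_trans h3 h2
    · -- (ii) m* dominates both linear forms
      intro j
      exact ⟨le_max_left _ _, le_max_right _ _⟩
    · -- (iii) upper SOC constraints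
      intro δ hδp k hk
      have h := (hsoc δ (Aux.DKplus_subset_DK hδp) k hk yu0 ⟨hy0, le_rfl⟩).2
      rwa [Aux.ysoc_eq_plus hxb hxr hδp.2 yu0 k] at h
    · -- (iv) lower SOC constraints with m*
      intro δ hδp k hk
      have hc0 : ∀ l : Fin K, 0 ≤ (if (l:ℕ) < k then Aux.mstar ηp ηm p.1 p.2 l else 0) := by
        intro l
        by_cases h : (l:ℕ) < k
        · simpa [h] using Aux.mstar_nonneg (ηm := ηm) (xb := p.1) hηp0 hxr l
        · simp [h]
      obtain ⟨γ, hγS, hγ01, hkey⟩ := Aux.exists_int_dominating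
        (fun l => if (l:ℕ) < k then Aux.mstar ηp ηm p.1 p.2 l else 0) hc0 hδp
      have hkey' : ∑ l ∈ Finset.univ.filter (fun l : Fin K => (l : ℕ) < k),
          Aux.mstar ηp ηm p.1 p.2 l * δ l
          ≤ ∑ l ∈ Finset.univ.filter (fun l : Fin K => (l : ℕ) < k),
            Aux.mstar ηp ηm p.1 p.2 l * γ l := by
        rw [Finset.sum_filter, Finset.sum_filter]
        have e1 : ∀ x : Fin K → ℝ, ∀ l : Fin K,
            (if (l:ℕ) < k then Aux.mstar ηp ηm p.1 p.2 l * x l else 0)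
              = (if (l:ℕ) < k then Aux.mstar ηp ηm p.1 p.2 l else 0) * x l := by
          intro x l; by_cases h : (l:ℕ) < k <;> simp [h]
        rw [Finset.sum_congr rfl (fun l _ => e1 δ l), Finset.sum_congr rfl (fun l _ => e1 γ l)]
        exact hkey
      have h1 := (hsoc (fun l => -γ l) (Aux.neg_mem_DK hγS) k hk yl0 ⟨le_rfl, hy0⟩).1
      have h2 := Aux.ysoc_neg_le' (d := d) hΔt.le hηp0 hηp1 hηm0 hηm1 hxb hxr hγ01
        (le_refl yl0) k
      have e : ∀ x : Fin K → ℝ,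
          ∑ l ∈ Finset.univ.filter (fun l : Fin K => (l : ℕ) < k),
            (ηp * p.1 l - Aux.mstar ηp ηm p.1 p.2 l * x l - d l)
          = ∑ l ∈ Finset.univ.filter (fun l : Fin K => (l : ℕ) < k), (ηp * p.1 l - d l)
            - ∑ l ∈ Finset.univ.filter (fun l : Fin K => (l : ℕ) < k),
              Aux.mstar ηp ηm p.1 p.2 l * x l := by
        intro x
        rw [← Finset.sum_sub_distrib]
        exact Finset.sum_congr rfl (fun l _ => by ring)
      have h3 := mul_le_mul_of_nonneg_left (by rw [e γ, e δ]; linarith :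
        ∑ l ∈ Finset.univ.filter (fun l : Fin K => (l : ℕ) < k),
          (ηp * p.1 l - Aux.mstar ηp ηm p.1 p.2 l * γ l - d l)
        ≤ ∑ l ∈ Finset.univ.filter (fun l : Fin K => (l : ℕ) < k),
          (ηp * p.1 l - Aux.mstar ηp ηm p.1 p.2 l * δ l - d l)) hΔt.le
      linarith
    · -- (v) upper target constraint
      intro δ hδp
      have hmem : |ysoc Δt ηp ηm p.1 p.2 δ d yuh K - ystar| ∈ Sabs :=
        ⟨δ, Aux.DKplus_subset_DK hδp, yuh, ⟨hyh, le_rfl⟩, rfl⟩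
      have h1 : ysoc Δt ηp ηm p.1 p.2 δ d yuh K - ystar ≤ sSup Sabs :=
        le_trans (le_abs_self _) (le_csSup hSabs_bdd hmem)
      have h2 := Aux.ysoc_eq_plus (ηp := ηp) (ηm := ηm) (Δt := Δt) (d := d) hxb hxr hδp.2 yuh K
      rw [Aux.sum_filt_univ] at h2
      linarith
    · -- (vi) lower target constraint
      intro δ hδp
      obtain ⟨γ, hγS, hγ01, hkey⟩ := Aux.exists_int_dominating (Aux.mstar ηp ηm p.1 p.2)
        (Aux.mstar_nonneg hηp0 hxr) hδp
      have hmem : |ysoc Δt ηp ηm p.1 p.2 (fun l => -γ l) d ylh K - ystar| ∈ Sabs :=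
        ⟨fun l => -γ l, Aux.neg_mem_DK hγS, ylh, ⟨le_rfl, hyh⟩, rfl⟩
      have h1 : ystar - sSup Sabs ≤ ysoc Δt ηp ηm p.1 p.2 (fun l => -γ l) d ylh K := by
        have ha := le_csSup hSabs_bdd hmem
        have hb := neg_abs_le (ysoc Δt ηp ηm p.1 p.2 (fun l => -γ l) d ylh K - ystar)
        linarith
      have h2 := Aux.ysoc_neg_le' (d := d) hΔt.le hηp0 hηp1 hηm0 hηm1 hxb hxr hγ01
        (le_refl ylh) K
      rw [Aux.sum_filt_univ] at h2
      have e : ∀ x : Fin K → ℝ,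
          ∑ j, (ηp * p.1 j - Aux.mstar ηp ηm p.1 p.2 j * x j - d j)
          = ∑ j, (ηp * p.1 j - d j) - ∑ j, Aux.mstar ηp ηm p.1 p.2 j * x j := by
        intro x
        rw [← Finset.sum_sub_distrib]
        exact Finset.sum_congr rfl (fun l _ => by ring)
      have h3 : ∑ j, (ηp * p.1 j - Aux.mstar ηp ηm p.1 p.2 j * γ j - d j)
          ≤ ∑ j, (ηp * p.1 j - Aux.mstar ηp ηm p.1 p.2 j * δ j - d j) := by
        rw [e γ, e δ]; linarith
      have h4 := mul_le_mul_of_nonneg_left h3 hΔt.le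
      linarith
    · -- equal value
      rw [hv, hScaled]
  · -- every feasible point of (R'_K) is dominated by a feasible point of (R_K)
    rintro v ⟨p, hpX, m, z, ⟨hc1, hc2, hc3, hc4, hc5, hc6⟩, hv⟩
    obtain ⟨hxb, hxr⟩ := hXK p hpX
    have hSB_ne : {w : ℝ | ∃ δ ∈ DK K Wh gh, ∃ y0 ∈ Icc ylh yuh,
        w = pstar * |ysoc Δt ηp ηm p.1 p.2 δ d y0 K - ystar|}.Nonempty :=
      ⟨_, 0, Aux.zero_mem_DK K Wh gh, ylh, ⟨le_rfl, hyh⟩, rfl⟩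
    refine ⟨cK p + sSup {w : ℝ | ∃ δ ∈ DK K Wh gh, ∃ y0 ∈ Icc ylh yuh,
      w = pstar * |ysoc Δt ηp ηm p.1 p.2 δ d y0 K - ystar|}, ⟨p, hpX, ?_, ?_, rfl⟩, ?_⟩
    · -- charger constraints
      intro δ hδ j
      have hδ1 := abs_le.1 (hδ.1 j)
      constructor
      · refine max_le ?_ (hybarp j)
        have h := mul_le_mul_of_nonneg_right hδ1.2 (hxr j)
        have := (hc1 j).1
        nlinarith
      · refine max_le ?_ (hybarm j)
        have h : -(δ j) * p.2 j ≤ 1 * p.2 j :=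
          mul_le_mul_of_nonneg_right (by linarith [hδ1.1]) (hxr j)
        have := (hc1 j).2
        nlinarith
    · -- SOC constraints
      intro δ hδ k hk y0 hy0
      constructor
      · have h1 := Aux.ysoc_ge_lower (d := d) hΔt.le hηp0 hηp1 hηm0 hηm1 hxb hxr hc2
          hδ.1 hy0.1 k
        have h2 := hc4 (fun l => |δ l|) (Aux.abs_mem_DKplus hδ) k hk
        linarith
      · have h1 := Aux.ysoc_le_plus (d := d) hΔt.le hηp0 hηm0 hxb hxr δ hy0.2 k
        have h2 := hc3 (fun l => max (δ l) 0) (Aux.pos_mem_DKplus hδ) k hk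
        linarith
    · -- value dominated
      rw [hv]
      refine add_le_add_right ?_ (cK p)
      refine csSup_le hSB_ne ?_
      rintro w ⟨δ, hδ, y0, hy0, rfl⟩
      refine mul_le_mul_of_nonneg_left ?_ hpstar
      rw [abs_le]
      constructor
      · -- ystar − z ≤ ysoc
        have h1 := Aux.ysoc_ge_lower (d := d) hΔt.le hηp0 hηp1 hηm0 hηm1 hxb hxr hc2
          hδ.1 hy0.1 K
        have h2 := hc6 (fun l => |δ l|) (Aux.abs_mem_DKplus hδ)
        rw [Aux.sum_filt_univ] at h1
        linarith
      · -- ysoc − ystar ≤ z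
        have h1 := Aux.ysoc_le_plus (d := d) hΔt.le hηp0 hηm0 hxb hxr δ hy0.2 K
        have h2 := hc5 (fun l => max (δ l) 0) (Aux.pos_mem_DKplus hδ)
        rw [Aux.sum_filt_univ] at h1
        linarith
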